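/- arXiv:1102.4479 — 2 statements merged into one kernel-verified Lean document; each statement's English description precedes it below -/
import Mathlib

section
/- In the random graph on ℤ/nℤ with t = cn/2 and L = o(log n) (edges at cyclic distance at most L each open with probability 1 − e^{−t/(nL)}), for every a > 0, the largest connected component has size o(n^a) with high probability; in particular there is no giant component when c > 1. -/
open MeasureTheory Filter

/-- Bernoulli measure on `Bool` with success probability `1 - e^{-x}`. -/
noncomputable def bern01 (x : ℝ) : Measure Bool :=
  (PMF.bernoulli (Real.toNNReal (1 - Real.exp (-x)))
    (Real.toNNReal_le_one.mpr (by linarith [Real.exp_pos (-x)]))).toMeasure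

/-- The second endpoint of the potential edge `(i, k)`: the vertex `i + k + 1 (mod n)`. -/
def cycNbr {n L : ℕ} (i : Fin n) (k : Fin L) : Fin n :=
  ⟨(i.val + k.val + 1) % n, Nat.mod_lt _ i.pos⟩

/-- The graph on `ℤ/nℤ` determined by the edge configuration `ω` on the potential edges
`(i, k)` joining `i` to `i + k + 1`, `0 ≤ k < L` (all pairs at cyclic distance `≤ L`). -/
def cycGraph (n L : ℕ) (ω : Fin n × Fin L → Bool) : SimpleGraph (Fin n) :=
  SimpleGraph.fromRel fun x y => ∃ e : Fin n × Fin L, ω e = true ∧ e.1 = x ∧ cycNbr e.1 e.2 = y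

/-- The size of the largest connected component. -/
noncomputable def largestComp (n L : ℕ) (ω : Fin n × Fin L → Bool) : ℕ :=
  Finset.univ.sup fun v : Fin n => Nat.card {w : Fin n | (cycGraph n L ω).Reachable v w}


set_option maxHeartbeats 1000000
open Real
open Fin.NatCast Fin.CommRing

/-- edge `e` crosses the cut between `u` and `u+1`. -/
def crosses {n L : ℕ} (e : Fin n × Fin L) (u : Fin n) : Prop := (u - e.1).val ≤ e.2.val

instance {n L : ℕ} (e : Fin n × Fin L) (u : Fin n) : Decidable (crosses e u) := by
  unfold crosses; infer_instance

lemma cycNbr_eq {n L : ℕ} [NeZero n] (i : Fin n) (k : Fin L) :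
    cycNbr i k = i + ((k.val + 1 : ℕ) : Fin n) := by
  apply Fin.ext
  rw [Fin.add_def]
  simp only [cycNbr, Fin.val_natCast]
  have h1 : i.val + k.val + 1 = i.val + (k.val + 1) := by omega
  rw [h1, Nat.add_mod i.val (k.val+1) n, Nat.mod_eq_of_lt i.isLt]

lemma crosses_iff {n L : ℕ} [NeZero n] (hL : L ≤ n) (e : Fin n × Fin L) (u : Fin n) :
    crosses e u ↔ ∃ d : ℕ, d ≤ e.2.val ∧ u = e.1 + (d : Fin n) := by
  constructor
  · intro h
    exact ⟨(u - e.1).val, h, by rw [Fin.cast_val_eq_self]; ring⟩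
  · rintro ⟨d, hd, rfl⟩
    have hdn : d < n := by have := e.2.isLt; omega
    have : e.1 + (d : Fin n) - e.1 = (d : Fin n) := by ring
    rw [crosses, this, Fin.val_natCast, Nat.mod_eq_of_lt hdn]
    exact hd

section Det
variable {n L : ℕ} [NeZero n] (hL : L ≤ n) (ω : Fin n × Fin L → Bool) (j0 : Fin n)
include hL

/-- relative position w.r.t. the uncrossed cut `j0`. -/
def relPos (j0 w : Fin n) : ℕ := (w - (j0 + 1)).val

omit hL in
lemma relPos_inj (j0 : Fin n) : Function.Injective (relPos j0) := by
  intro a b h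
  have : a - (j0 + 1) = b - (j0 + 1) := Fin.ext h
  have := congrArg (· + (j0 + 1)) this
  simpa [sub_add_cancel] using this

omit hL in
lemma self_eq_relPos (j0 w : Fin n) : w = (j0 + 1) + ((relPos j0 w : ℕ) : Fin n) := by
  rw [relPos, Fin.cast_val_eq_self]; ring

/-- Geometry of an edge that does not cross the cut `j0`. -/
lemma edge_geom (e : Fin n × Fin L) (hne : ¬ crosses e j0) :
    relPos j0 (cycNbr e.1 e.2) = relPos j0 e.1 + e.2.val + 1 ∧
    relPos j0 e.1 + e.2.val + 1 ≤ n - 1 ∧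
    (∀ s : ℕ, relPos j0 e.1 ≤ s → s < relPos j0 e.1 + e.2.val + 1 →
      crosses e (j0 + 1 + (s : Fin n))) := by
  set a := relPos j0 e.1 with ha
  have han : a < n := (e.1 - (j0+1)).isLt
  have he1 : e.1 = (j0 + 1) + ((a : ℕ) : Fin n) := self_eq_relPos j0 e.1
  rw [crosses_iff hL] at hne
  push_neg at hne
  -- (ii) : a + k + 1 ≤ n - 1
  have hii : a + e.2.val + 1 ≤ n - 1 := by
    by_contra hcon
    have hd : n - 1 - a ≤ e.2.val := by omega
    have := hne (n - 1 - a) hd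
    apply this
    rw [he1]
    have : ((a : ℕ) : Fin n) + ((n - 1 - a : ℕ) : Fin n) = ((n - 1 : ℕ) : Fin n) := by
      push_cast; rw [← Nat.cast_add]; congr 1; omega
    rw [add_assoc, this]
    have hn1 : ((n - 1 : ℕ) : Fin n) = -1 := by
      push_cast [Nat.cast_sub (Nat.one_le_iff_ne_zero.mpr (NeZero.ne n))]
      simp
    rw [hn1]; ring
  refine ⟨?_, hii, ?_⟩
  · -- rel of neighbor
    rw [cycNbr_eq, relPos, he1]
    have : (j0 + 1) + ((a : ℕ) : Fin n) + ((e.2.val + 1 : ℕ) : Fin n) - (j0 + 1)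
        = ((a + e.2.val + 1 : ℕ) : Fin n) := by push_cast; ring
    rw [this, Fin.val_natCast, Nat.mod_eq_of_lt (by omega)]
  · intro s hs1 hs2
    rw [crosses_iff hL]
    refine ⟨s - a, by omega, ?_⟩
    rw [he1]
    push_cast
    rw [Nat.cast_sub hs1]
    ring

/-- crossing the cut `j0+1+s` via a walk straddling relative position `s`. -/
lemma walk_cross (hunc : ¬ ∃ e, ω e = true ∧ crosses e j0) {w w' : Fin n}
    (P : (cycGraph n L ω).Walk w w') :
    ∀ s : ℕ, relPos j0 w ≤ s → s < relPos j0 w' →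
      ∃ e, ω e = true ∧ crosses e (j0 + 1 + (s : Fin n)) := by
  induction P with
  | nil => intro s h1 h2; omega
  | @cons u x w' h P ih =>
    intro s h1 h2
    rw [cycGraph, SimpleGraph.fromRel_adj] at h
    obtain ⟨-, he⟩ := h
    by_cases hx : relPos j0 x ≤ s
    · exact ih s hx h2
    · push_neg at hx
      rcases he with ⟨e, hopen, he1, he2⟩ | ⟨e, hopen, he1, he2⟩
      · -- e.1 = u, nbr = x
        have hg := edge_geom hL j0 e (fun hc => hunc ⟨e, hopen, hc⟩)
        rw [he1] at he2 hg
        rw [he2] at hg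
        exact ⟨e, hopen, hg.2.2 s h1 (by omega)⟩
      · -- e.1 = x, nbr = u
        have hg := edge_geom hL j0 e (fun hc => hunc ⟨e, hopen, hc⟩)
        rw [he1] at he2 hg
        rw [he2] at hg
        omega

end Det

/-- Key deterministic lemma: a large component forces many consecutive crossed cuts. -/
lemma crossed_of_largestComp {n L : ℕ} [NeZero n] (hL : L ≤ n)
    (ω : Fin n × Fin L → Bool) {m : ℕ} (hm2 : 2 ≤ m) (hmn : m ≤ n)
    (h : m ≤ largestComp n L ω) :
    ∃ j : Fin n, ∀ t : ℕ, t < m - 1 → ∃ e, ω e = true ∧ crosses e (j + (t : Fin n)) := by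
  by_cases hall : ∀ u : Fin n, ∃ e, ω e = true ∧ crosses e u
  · exact ⟨0, fun t _ => hall _⟩
  push_neg at hall
  obtain ⟨j0, hunc⟩ := hall
  rw [largestComp, Finset.le_sup_iff (by omega : (0:ℕ) < m)] at h
  obtain ⟨v, -, hv⟩ := h
  set C : Set (Fin n) := {w : Fin n | (cycGraph n L ω).Reachable v w} with hC
  have hCfin : C.Finite := Set.toFinite C
  have hcard : m ≤ hCfin.toFinset.card := by
    rwa [Nat.card_coe_set_eq, Set.ncard_eq_toFinset_card C hCfin] at hv
  -- the finset of relative positions of the component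
  set T : Finset ℕ := hCfin.toFinset.image (relPos j0) with hT
  have hTcard : m ≤ T.card := by
    rwa [hT, Finset.card_image_of_injective _ (relPos_inj j0)]
  have hTne : T.Nonempty := Finset.card_pos.mp (by omega)
  set a := T.min' hTne with haa
  have haT : a ∈ T := T.min'_mem hTne
  obtain ⟨w0, hw0C, hw0⟩ := Finset.mem_image.mp haT
  refine ⟨j0 + 1 + (a : Fin n), ?_⟩
  intro t ht
  -- find an element of T larger than a + t
  have hbig : ∃ b ∈ T, a + t < b := by
    by_contra hcon
    push_neg at hcon
    have hsub : T ⊆ Finset.Icc a (a + t) := by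
      intro b hb
      exact Finset.mem_Icc.mpr ⟨T.min'_le b hb, hcon b hb⟩
    have := Finset.card_le_card hsub
    rw [Nat.card_Icc] at this
    omega
  obtain ⟨b, hbT, hab⟩ := hbig
  obtain ⟨w1, hw1C, hw1⟩ := Finset.mem_image.mp hbT
  have hr0 : (cycGraph n L ω).Reachable v w0 := by
    rwa [Set.Finite.mem_toFinset] at hw0C
  have hr1 : (cycGraph n L ω).Reachable v w1 := by
    rwa [Set.Finite.mem_toFinset] at hw1C
  obtain ⟨P⟩ := (hr0.symm.trans hr1)
  have := walk_cross hL ω j0 (by push_neg; exact hunc) P (a + t) (by omega) (by omega)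
  have hcast : ((j0 + 1 + (a : Fin n)) + (t : Fin n)) = j0 + 1 + ((a + t : ℕ) : Fin n) := by
    push_cast; ring
  rw [hcast]
  exact this
open scoped ENNReal

section Core
variable {ι : Type*} [Fintype ι] [DecidableEq ι] (ν : Measure Bool) [IsProbabilityMeasure ν]

local notation "μpi" => Measure.pi (fun _ : ι => ν)

lemma meas_all {κ : Type*} [Finite κ] (S : Set (κ → Bool)) : MeasurableSet S :=
  (Set.toFinite S).measurableSet

/-- Two events depending on disjoint coordinate blocks are independent. -/
lemma indep_blocks (p : ι → Prop) [DecidablePred p] (A B : Set (ι → Bool))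
    (hA : ∀ ω ω' : ι → Bool, (∀ i, ¬ p i → ω i = ω' i) → (ω ∈ A ↔ ω' ∈ A))
    (hB : ∀ ω ω' : ι → Bool, (∀ i, p i → ω i = ω' i) → (ω ∈ B ↔ ω' ∈ B)) :
    μpi (A ∩ B) = μpi A * μpi B := by
  classical
  set e := MeasurableEquiv.piEquivPiSubtypeProd (fun _ : ι => Bool) p with he
  have hmp := MeasureTheory.measurePreserving_piEquivPiSubtypeProd (fun _ : ι => ν) p
  have hesymm : ∀ (f : (∀ _ : {x // p x}, Bool) × (∀ _ : {x // ¬ p x}, Bool)) (x : ι),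
      e.symm f x = if h : p x then f.1 ⟨x,h⟩ else f.2 ⟨x,h⟩ := by
    intro f x
    simp [he, MeasurableEquiv.piEquivPiSubtypeProd, Equiv.piEquivPiSubtypeProd_symm_apply]
  set A₂ : Set (∀ _ : {x // ¬ p x}, Bool) := {τ | e.symm ⟨fun _ => false, τ⟩ ∈ A} with hA2
  set B₁ : Set (∀ _ : {x // p x}, Bool) := {σ | e.symm ⟨σ, fun _ => false⟩ ∈ B} with hB1
  have hApre : e.symm ⁻¹' A = Set.univ ×ˢ A₂ := by
    ext ⟨σ, τ⟩
    simp only [Set.mem_preimage, Set.mem_prod, Set.mem_univ, true_and, hA2, Set.mem_setOf_eq]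
    exact hA _ _ (fun i hi => by rw [hesymm, hesymm]; simp [hi])
  have hBpre : e.symm ⁻¹' B = B₁ ×ˢ Set.univ := by
    ext ⟨σ, τ⟩
    simp only [Set.mem_preimage, Set.mem_prod, Set.mem_univ, and_true, hB1, Set.mem_setOf_eq]
    exact hB _ _ (fun i hi => by rw [hesymm, hesymm]; simp [hi])
  have key : ∀ S : Set (ι → Bool), μpi S =
      ((Measure.pi fun _ : {x // p x} => ν).prod (Measure.pi fun _ : {x // ¬ p x} => ν))
        (e.symm ⁻¹' S) := by
    intro S
    have h1 := hmp.measure_preimage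
      ((Set.toFinite (e.symm ⁻¹' S)).measurableSet).nullMeasurableSet
    rwa [show e ⁻¹' (e.symm ⁻¹' S) = S from by ext ω; simp] at h1
  rw [key, key, key, Set.preimage_inter, hApre, hBpre]
  have : (Set.univ ×ˢ A₂) ∩ (B₁ ×ˢ Set.univ) = B₁ ×ˢ A₂ := by
    ext ⟨σ, τ⟩; simp [and_comm]
  rw [this, Measure.prod_prod, Measure.prod_prod, Measure.prod_prod]
  simp [mul_comm]
end Core

section Core2
variable {ι : Type*} [Fintype ι] [DecidableEq ι] (ν : Measure Bool) [IsProbabilityMeasure ν]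

lemma measure_allFalse (s : Finset ι) :
    Measure.pi (fun _ : ι => ν) {ω : ι → Bool | ∀ i ∈ s, ω i = false}
      = (ν {false}) ^ s.card := by
  classical
  have hset : {ω : ι → Bool | ∀ i ∈ s, ω i = false}
      = Set.pi Set.univ (fun i => if i ∈ s then {false} else Set.univ) := by
    ext ω
    simp only [Set.mem_setOf_eq, Set.mem_pi, Set.mem_univ, forall_true_left]
    constructor
    · intro h i
      by_cases hi : i ∈ s <;> simp [hi, h]
    · intro h i hi
      have := h i
      simpa [hi] using this
  rw [hset, Measure.pi_pi]
  have : ∀ i : ι, ν (if i ∈ s then ({false} : Set Bool) else Set.univ)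
      = if i ∈ s then ν {false} else 1 := by
    intro i
    by_cases hi : i ∈ s
    · rw [if_pos hi, if_pos hi]
    · rw [if_neg hi, if_neg hi, measure_univ]
  rw [Finset.prod_congr rfl (fun i _ => this i),
    Finset.prod_ite_mem Finset.univ s (fun _ => ν {false}),
    Finset.univ_inter, Finset.prod_const]

lemma measure_cutEvent_le (s : Finset ι) (M : ℕ) (hM : s.card ≤ M) :
    Measure.pi (fun _ : ι => ν) {ω : ι → Bool | ∃ i ∈ s, ω i = true}
      ≤ 1 - (ν {false}) ^ M := by
  classical
  have hcompl : {ω : ι → Bool | ∃ i ∈ s, ω i = true}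
      = {ω : ι → Bool | ∀ i ∈ s, ω i = false}ᶜ := by
    ext ω
    rw [Set.mem_compl_iff, Set.mem_setOf_eq, Set.mem_setOf_eq]
    push_neg
    simp only [Bool.not_eq_false]
  rw [hcompl, measure_compl ((Set.toFinite _).measurableSet) (measure_ne_top _ _),
    measure_univ, measure_allFalse]
  exact tsub_le_tsub le_rfl (pow_le_pow_right_of_le_one' prob_le_one hM)
end Core2

section Core3
variable {ι : Type*} [Fintype ι] [DecidableEq ι] (ν : Measure Bool) [IsProbabilityMeasure ν]

lemma measure_iInter_cutEvents (S : ℕ → Finset ι) (q : ℝ≥0∞)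
    (hq : ∀ t, Measure.pi (fun _ : ι => ν) {ω : ι → Bool | ∃ i ∈ S t, ω i = true} ≤ q)
    (hdisj : ∀ t t', t < t' → Disjoint (S t) (S t')) :
    ∀ r : ℕ, Measure.pi (fun _ : ι => ν)
      (⋂ t ∈ Finset.range r, {ω : ι → Bool | ∃ i ∈ S t, ω i = true}) ≤ q ^ r := by
  intro r
  induction r with
  | zero => simp
  | succ r ih =>
    have hsplit : (⋂ t ∈ Finset.range (r+1), {ω : ι → Bool | ∃ i ∈ S t, ω i = true})
        = (⋂ t ∈ Finset.range r, {ω : ι → Bool | ∃ i ∈ S t, ω i = true})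
          ∩ {ω : ι → Bool | ∃ i ∈ S r, ω i = true} := by
      ext ω
      simp only [Set.mem_iInter, Set.mem_inter_iff, Finset.mem_range]
      constructor
      · intro h
        exact ⟨fun t ht => h t (by omega), h r (by omega)⟩
      · rintro ⟨h1, h2⟩ t ht
        rcases Nat.lt_or_ge t r with h | h
        · exact h1 t h
        · have : t = r := by omega
          subst this; exact h2
    have hA : ∀ ω ω' : ι → Bool, (∀ i, ¬ (i ∈ S r) → ω i = ω' i) →
        (ω ∈ ⋂ t ∈ Finset.range r, {ω : ι → Bool | ∃ i ∈ S t, ω i = true}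
          ↔ ω' ∈ ⋂ t ∈ Finset.range r, {ω : ι → Bool | ∃ i ∈ S t, ω i = true}) := by
      intro ω ω' hagree
      simp only [Set.mem_iInter]
      constructor <;> intro h t ht <;>
        · obtain ⟨i, hiS, hi⟩ := h t ht
          refine ⟨i, hiS, ?_⟩
          have hnotin : i ∉ S r := by
            have := hdisj t r (Finset.mem_range.mp ht)
            exact fun hc => (Finset.disjoint_left.mp this) hiS hc
          first
            | (rw [← hagree i hnotin]; exact hi)
            | (rw [hagree i hnotin]; exact hi)
    have hB : ∀ ω ω' : ι → Bool, (∀ i, (i ∈ S r) → ω i = ω' i) →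
        (ω ∈ {ω : ι → Bool | ∃ i ∈ S r, ω i = true}
          ↔ ω' ∈ {ω : ι → Bool | ∃ i ∈ S r, ω i = true}) := by
      intro ω ω' hagree
      constructor <;> intro h <;>
        · obtain ⟨i, hiS, hi⟩ := h
          refine ⟨i, hiS, ?_⟩
          first
            | (rw [← hagree i hiS]; exact hi)
            | (rw [hagree i hiS]; exact hi)
    rw [hsplit, indep_blocks ν (fun i => i ∈ S r) _ _ hA hB]
    calc _ ≤ q ^ r * q := mul_le_mul' ih (hq r)
      _ = q ^ (r+1) := (pow_succ q r).symm
end Core3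

section Glue
variable {n L : ℕ} [NeZero n]

def cutSet (n L : ℕ) (u : Fin n) : Finset (Fin n × Fin L) :=
  Finset.univ.filter (fun e => crosses e u)

lemma mem_cutSet {u : Fin n} {e : Fin n × Fin L} : e ∈ cutSet n L u ↔ crosses e u := by
  simp [cutSet]

lemma cutSet_card_le (u : Fin n) : (cutSet n L u).card ≤ L * L := by
  classical
  have key : ∀ e ∈ cutSet n L u, (u - e.1).val < L := by
    intro e he
    exact lt_of_le_of_lt (mem_cutSet.mp he) e.2.isLt
  have : (cutSet n L u).card ≤ (Finset.range L ×ˢ Finset.range L).card := by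
    apply Finset.card_le_card_of_injOn (fun e => ((u - e.1).val, e.2.val))
    · intro e he
      simp only [Finset.mem_product, Finset.mem_range]
      exact Finset.mem_product.mpr ⟨Finset.mem_range.mpr (key e he), Finset.mem_range.mpr e.2.isLt⟩
    · intro e he e' he' heq
      simp only [Prod.mk.injEq] at heq
      have h1 : u - e.1 = u - e'.1 := Fin.ext heq.1
      have h2 : e.1 = e'.1 := by
        have := sub_right_inj.mp h1; exact this
      exact Prod.ext h2 (Fin.ext heq.2)
  simpa using this

lemma disjoint_cutSet (hL : L ≤ n) (u u' : Fin n)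
    (h1 : L ≤ (u - u').val) (h2 : (u - u').val ≤ n - L) :
    Disjoint (cutSet n L u) (cutSet n L u') := by
  rw [Finset.disjoint_left]
  intro e heu heu'
  set d := (u - e.1).val with hd
  set d' := (u' - e.1).val with hd'
  have hdL : d < L := lt_of_le_of_lt (mem_cutSet.mp heu) e.2.isLt
  have hd'L : d' < L := lt_of_le_of_lt (mem_cutSet.mp heu') e.2.isLt
  have hsub : u - u' = ((d : ℕ) : Fin n) - ((d' : ℕ) : Fin n) := by
    rw [hd, hd', Fin.cast_val_eq_self, Fin.cast_val_eq_self]; ring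
  rcases le_or_gt d' d with hc | hc
  · have : u - u' = ((d - d' : ℕ) : Fin n) := by rw [hsub, Nat.cast_sub hc]
    rw [this, Fin.val_natCast, Nat.mod_eq_of_lt (by omega)] at h1 h2
    omega
  · have : u - u' = ((n - (d' - d) : ℕ) : Fin n) := by
      rw [hsub]
      push_cast [Nat.cast_sub (by omega : d' - d ≤ n), Nat.cast_sub (Nat.le_of_lt hc)]
      rw [Fin.natCast_self]
      ring
    rw [this, Fin.val_natCast, Nat.mod_eq_of_lt (by omega)] at h1 h2
    omega
end Glue

lemma largestComp_le (n L : ℕ) (ω : Fin n × Fin L → Bool) : largestComp n L ω ≤ n := by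
  apply Finset.sup_le
  intro v _
  rw [Nat.card_coe_set_eq]
  calc ({w : Fin n | (cycGraph n L ω).Reachable v w}).ncard
      ≤ (Set.univ : Set (Fin n)).ncard := Set.ncard_le_ncard (Set.subset_univ _) (Set.toFinite _)
    _ = n := by rw [Set.ncard_univ]; simp

lemma main_bound (n L : ℕ) [NeZero n] (h1L : 1 ≤ L) (hL : L ≤ n) (ν : Measure Bool)
    [IsProbabilityMeasure ν] (m : ℕ) (hm2 : 2 ≤ m) (hmn : m ≤ n) :
    Measure.pi (fun _ : Fin n × Fin L => ν) {ω | m ≤ largestComp n L ω}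
      ≤ (n : ℝ≥0∞) * (1 - (ν {false}) ^ (L * L)) ^ ((m - 1) / L) := by
  classical
  set μ := Measure.pi (fun _ : Fin n × Fin L => ν) with hμ
  set q : ℝ≥0∞ := 1 - (ν {false}) ^ (L * L) with hq
  set r := (m - 1) / L with hr
  have hrL : r * L ≤ m - 1 := Nat.div_mul_le_self _ _
  set S : Fin n → ℕ → Finset (Fin n × Fin L) :=
    fun j t => if t < r then cutSet n L (j + ((t * L : ℕ) : Fin n)) else ∅ with hS
  have hincl : {ω : Fin n × Fin L → Bool | m ≤ largestComp n L ω} ⊆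
      ⋃ j : Fin n, ⋂ t ∈ Finset.range r, {ω | ∃ e ∈ S j t, ω e = true} := by
    intro ω hω
    obtain ⟨j, hj⟩ := crossed_of_largestComp hL ω hm2 hmn hω
    refine Set.mem_iUnion.mpr ⟨j, ?_⟩
    simp only [Set.mem_iInter]
    intro t ht
    rw [Finset.mem_range] at ht
    have htL : t * L < m - 1 := by
      have h4 : t * L ≤ (r - 1) * L := Nat.mul_le_mul_right L (by omega)
      have h5 : (r - 1) * L = r * L - L := by rw [Nat.sub_mul, one_mul]
      omega
    obtain ⟨e, hopen, hcr⟩ := hj (t * L) htL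
    rw [hS]
    simp only [if_pos ht]
    exact ⟨e, mem_cutSet.mpr hcr, hopen⟩
  have hper : ∀ j : Fin n,
      μ (⋂ t ∈ Finset.range r, {ω | ∃ e ∈ S j t, ω e = true}) ≤ q ^ r := by
    intro j
    apply measure_iInter_cutEvents
    · intro t
      by_cases ht : t < r
      · rw [hS]; simp only [if_pos ht]
        exact measure_cutEvent_le ν _ (L * L) (cutSet_card_le _)
      · rw [hS]; simp only [if_neg ht]
        have : {ω : Fin n × Fin L → Bool | ∃ i ∈ (∅ : Finset (Fin n × Fin L)), ω i = true}
            = ∅ := by simp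
        rw [this]; simp
    · intro t t' htt'
      by_cases ht' : t' < r
      · have ht : t < r := lt_trans htt' ht'
        rw [hS]; simp only [if_pos ht, if_pos ht']
        have hsub : (j + ((t' * L : ℕ) : Fin n)) - (j + ((t * L : ℕ) : Fin n))
            = (((t' - t) * L : ℕ) : Fin n) := by
          have h6 : (t' - t) * L = t' * L - t * L := by rw [Nat.sub_mul]
          rw [h6, Nat.cast_sub (Nat.mul_le_mul_right L (le_of_lt htt'))]
          ring
        have hval : ((j + ((t' * L : ℕ) : Fin n)) - (j + ((t * L : ℕ) : Fin n))).val
            = (t' - t) * L := by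
          rw [hsub, Fin.val_natCast, Nat.mod_eq_of_lt]
          have : (t' - t) * L ≤ (r - 1) * L := Nat.mul_le_mul_right L (by omega)
          have h5 : (r - 1) * L = r * L - L := by rw [Nat.sub_mul, one_mul]
          omega
        refine (disjoint_cutSet hL _ _ ?_ ?_).symm
        · rw [hval]
          calc L = 1 * L := (one_mul L).symm
            _ ≤ (t' - t) * L := Nat.mul_le_mul_right L (by omega)
        · rw [hval]
          have : (t' - t) * L ≤ (r - 1) * L := Nat.mul_le_mul_right L (by omega)
          have h5 : (r - 1) * L = r * L - L := by rw [Nat.sub_mul, one_mul]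
          omega
      · rw [hS]; simp only [if_neg ht']
        exact Finset.disjoint_empty_right _
  calc μ {ω | m ≤ largestComp n L ω}
      ≤ μ (⋃ j : Fin n, ⋂ t ∈ Finset.range r, {ω | ∃ e ∈ S j t, ω e = true}) :=
        measure_mono hincl
    _ ≤ ∑' j : Fin n, μ (⋂ t ∈ Finset.range r, {ω | ∃ e ∈ S j t, ω e = true}) :=
        measure_iUnion_le _
    _ ≤ ∑' _j : Fin n, q ^ r := ENNReal.tsum_le_tsum (fun j => hper j)
    _ = (n : ℝ≥0∞) * q ^ r := by
        rw [tsum_fintype]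
        simp [Finset.sum_const, nsmul_eq_mul]
open MeasureTheory Filter Real

lemma log_sq_div_rpow (b : ℝ) (hb : 0 < b) :
    Tendsto (fun n : ℕ => (Real.log n)^(2:ℕ) / (n:ℝ) ^ b) atTop (nhds 0) := by
  have h1 : Tendsto (fun x : ℝ => Real.log x ^ (2:ℕ) / (1 * x + 0)) atTop (nhds 0) :=
    Real.tendsto_pow_log_div_mul_add_atTop 1 0 2 one_ne_zero
  have h2 : Tendsto (fun n : ℕ => (n:ℝ) ^ b) atTop atTop :=
    (tendsto_rpow_atTop hb).comp tendsto_natCast_atTop_atTop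
  have h4 : Tendsto (fun n : ℕ => (Real.log ((n:ℝ)^b))^(2:ℕ) / (n:ℝ)^b) atTop (nhds 0) := by
    refine (h1.comp h2).congr (fun n => ?_)
    simp [Function.comp]
  have h5 := h4.mul_const (1/b^2)
  rw [zero_mul] at h5
  refine Tendsto.congr' ?_ h5
  filter_upwards [eventually_gt_atTop 0] with n hn
  rw [Real.log_rpow (by positivity)]
  field_simp

lemma analysis_aux (c a ε : ℝ) (hc : 0 < c) (ha : 0 < a) (hε : 0 < ε)
    (L : ℕ → ℕ) (hL1 : ∀ n, 1 ≤ L n)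
    (hLo : Tendsto (fun n => (L n : ℝ) / Real.log n) atTop (nhds 0)) :
    Tendsto (fun n : ℕ => Real.log n
      - ((Nat.floor (ε * (n:ℝ) ^ a) / (L n) : ℕ) : ℝ) * Real.exp (-(c * L n)/2))
      atTop atBot := by
  set b := a / 4 with hb
  have hbpos : 0 < b := by positivity
  set y : ℕ → ℝ := fun n => Real.exp (-(c * L n)/2) with hy
  set r : ℕ → ℕ := fun n => Nat.floor (ε * (n:ℝ) ^ a) / (L n) with hrdef
  have hlog : Tendsto (fun n : ℕ => Real.log n) atTop atTop :=
    Real.tendsto_log_atTop.comp tendsto_natCast_atTop_atTop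
  have hE2 : ∀ᶠ n : ℕ in atTop, (L n : ℝ) ≤ Real.log n := by
    filter_upwards [hLo.eventually_lt_const one_pos, hlog.eventually_ge_atTop 1] with n h1 h2
    have hlogpos : (0:ℝ) < Real.log n := by linarith
    rw [div_lt_one hlogpos] at h1
    linarith
  have hE3 : ∀ᶠ n : ℕ in atTop, (n:ℝ) ^ (-b) ≤ y n := by
    filter_upwards [hLo.eventually_lt_const (by positivity : (0:ℝ) < 2 * b / c),
      hlog.eventually_ge_atTop 1, eventually_gt_atTop 0] with n h1 h2 hn
    have hlogpos : (0:ℝ) < Real.log n := by linarith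
    rw [div_lt_iff₀ hlogpos] at h1
    have h6 : c * (L n : ℝ) ≤ 2 * b * Real.log n := by
      have h1' := mul_lt_mul_of_pos_left h1 hc
      rw [show c * (2 * b / c * Real.log n) = 2 * b * Real.log n from by field_simp] at h1'
      linarith
    have h7 : -(b * Real.log n) ≤ -(c * L n)/2 := by linarith
    calc (n:ℝ) ^ (-b) = Real.exp (Real.log n * (-b)) := Real.rpow_def_of_pos (by positivity) _
      _ = Real.exp (-(b * Real.log n)) := by congr 1; ring
      _ ≤ y n := Real.exp_le_exp.mpr h7
  have hfl : Tendsto (fun n : ℕ => ε * (n:ℝ) ^ a) atTop atTop :=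
    Tendsto.const_mul_atTop hε ((tendsto_rpow_atTop ha).comp tendsto_natCast_atTop_atTop)
  have hlogsmall : Tendsto (fun n : ℕ => Real.log n / (n:ℝ) ^ a) atTop (nhds 0) :=
    (isLittleO_log_rpow_atTop ha).tendsto_div_nhds_zero.comp tendsto_natCast_atTop_atTop
  have hE1 : ∀ᶠ n : ℕ in atTop, Real.log n + 1 + L n ≤ (ε/2) * (n:ℝ) ^ a := by
    filter_upwards [hlogsmall.eventually_lt_const (by positivity : (0:ℝ) < ε/8),
      hE2, hfl.eventually_ge_atTop 8, eventually_gt_atTop 0,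
      hlog.eventually_ge_atTop 1] with n h1 h2 h3 hn h4
    have hna : (0:ℝ) < (n:ℝ)^a := by positivity
    rw [div_lt_iff₀ hna] at h1
    have h5 : (1:ℝ) ≤ ε/8 * (n:ℝ)^a := by
      have : (8:ℝ) ≤ ε * (n:ℝ)^a := h3
      linarith
    nlinarith
  have hrlb : ∀ᶠ n : ℕ in atTop, (ε/2) * (n:ℝ)^a / Real.log n ≤ (r n : ℝ) := by
    filter_upwards [hE1, hE2, hlog.eventually_ge_atTop 1] with n h1 h2 h3
    have hlogpos : (0:ℝ) < Real.log n := by linarith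
    have hLpos' : 0 < L n := Nat.lt_of_lt_of_le Nat.zero_lt_one (hL1 n)
    have hLpos : (0:ℝ) < L n := by exact_mod_cast hLpos'
    set f := Nat.floor (ε * (n:ℝ)^a) with hf
    have hdm : f = L n * r n + f % L n := (Nat.div_add_mod f (L n)).symm
    have hmod : f % L n < L n := Nat.mod_lt _ hLpos'
    have hkey : f < L n * r n + L n := hdm ▸ Nat.add_lt_add_left hmod _
    have hkeyR : (f : ℝ) < (r n : ℝ) * L n + L n := by
      have := (Nat.cast_lt (α := ℝ)).mpr hkey
      push_cast at this
      linarith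
    have hfloor : ε * (n:ℝ)^a - 1 ≤ (f : ℝ) := by
      have := Nat.sub_one_lt_floor (ε * (n:ℝ)^a)
      rw [hf]
      linarith
    have hnum : (ε/2) * (n:ℝ)^a ≤ ε * (n:ℝ)^a - 1 - L n := by linarith
    have hr1 : (ε * (n:ℝ)^a - 1 - L n) / L n ≤ (r n : ℝ) := by
      rw [div_le_iff₀ hLpos]
      nlinarith
    calc (ε/2) * (n:ℝ)^a / Real.log n
        ≤ (ε * (n:ℝ)^a - 1 - L n) / L n :=
          div_le_div₀ (by linarith) hnum hLpos h2
      _ ≤ (r n : ℝ) := hr1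
  -- the product lower bound
  have hprod : ∀ᶠ n : ℕ in atTop,
      (ε/2) * (n:ℝ)^(3*b) / Real.log n ≤ (r n : ℝ) * y n := by
    filter_upwards [hrlb, hE3, hlog.eventually_ge_atTop 1, eventually_gt_atTop 0]
      with n h1 h2 h3 hn
    have hlogpos : (0:ℝ) < Real.log n := by linarith
    have hstep : (ε/2) * (n:ℝ)^a / Real.log n * ((n:ℝ)^(-b)) ≤ (r n : ℝ) * y n := by
      apply mul_le_mul h1 h2 (by positivity) (by positivity)
    calc (ε/2) * (n:ℝ)^(3*b) / Real.log n
        = (ε/2) * (n:ℝ)^a / Real.log n * ((n:ℝ)^(-b)) := by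
          rw [mul_div_assoc, mul_div_assoc, mul_assoc]
          congr 1
          rw [div_mul_eq_mul_div, ← Real.rpow_add (by positivity : (0:ℝ) < (n:ℝ))]
          congr 2
          rw [hb]; ring
      _ ≤ (r n : ℝ) * y n := hstep
  -- Ψ → ∞
  have hAA : Tendsto (fun n : ℕ => (n:ℝ)^(3*b) / (Real.log n)^(2:ℕ)) atTop atTop := by
    have h0 := log_sq_div_rpow (3*b) (by positivity)
    have hpos : ∀ᶠ n : ℕ in atTop, (Real.log n)^(2:ℕ) / (n:ℝ)^(3*b) ∈ Set.Ioi (0:ℝ) := by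
      filter_upwards [hlog.eventually_ge_atTop 1, eventually_gt_atTop 0] with n h1 hn
      have : (0:ℝ) < Real.log n := by linarith
      exact Set.mem_Ioi.mpr (by positivity)
    have := (tendsto_nhdsWithin_of_tendsto_nhds_of_eventually_within _ h0 hpos).inv_tendsto_nhdsGT_zero
    refine this.congr (fun n => ?_)
    simp [Pi.inv_apply, inv_div]
  have hA : Tendsto (fun n : ℕ => (ε/2) * ((n:ℝ)^(3*b) / (Real.log n)^(2:ℕ)) - 2)
      atTop atTop :=
    tendsto_atTop_add_const_right _ (-2) (Tendsto.const_mul_atTop (r := ε/2) (by positivity) hAA)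
      |>.congr (fun n => by ring)
  have hPsi : Tendsto (fun n : ℕ => Real.log n
      * ((ε/2) * ((n:ℝ)^(3*b) / (Real.log n)^(2:ℕ)) - 2)) atTop atTop :=
    hlog.atTop_mul_atTop₀ hA
  have hfinal : ∀ᶠ n : ℕ in atTop, 2 * Real.log n ≤ (r n : ℝ) * y n := by
    filter_upwards [hprod, hPsi.eventually_ge_atTop 0, hlog.eventually_ge_atTop 1]
      with n h1 h2 h3
    have hlogpos : (0:ℝ) < Real.log n := by linarith
    have hid : Real.log n * ((ε/2) * ((n:ℝ)^(3*b) / (Real.log n)^(2:ℕ)) - 2)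
        = (ε/2) * (n:ℝ)^(3*b) / Real.log n - 2 * Real.log n := by
      field_simp
    rw [hid] at h2
    linarith
  apply tendsto_atBot_mono' atTop ?_ (tendsto_neg_atTop_atBot.comp hlog)
  filter_upwards [hfinal] with n h1
  simp only [Function.comp]
  linarith

instance bern01_prob (x : ℝ) : IsProbabilityMeasure (bern01 x) := by
  unfold bern01; infer_instance

lemma bern01_false (x : ℝ) (hx : 0 ≤ x) :
    bern01 x {false} = ENNReal.ofReal (Real.exp (-x)) := by
  rw [bern01, PMF.toMeasure_apply_singleton _ _ (measurableSet_singleton _),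
    PMF.bernoulli_apply]
  have hle : Real.exp (-x) ≤ 1 := Real.exp_le_one_iff.mpr (neg_nonpos.mpr hx)
  simp only [cond]
  rw [ENNReal.ofReal]; congr 1; ext
  rw [NNReal.coe_sub (Real.toNNReal_le_one.mpr (by linarith [Real.exp_pos (-x)])),
    Real.coe_toNNReal _ (by linarith), Real.coe_toNNReal _ (Real.exp_nonneg _)]
  push_cast; ring


/-- With `t = cn/2` (so each of the `nL` potential edges at cyclic distance at most `L`
is open independently with probability `1 - e^{-t/(nL)} = 1 - e^{-c/(2L)}`) and
`L(n) = o(log n)`, for every `a > 0` the largest component is `o(n^a)` with high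
probability; in particular there is no giant component (even when `c > 1`). -/
theorem no_giant_component_of_small_L (c : ℝ) (hc : 0 < c)
    (L : ℕ → ℕ) (hL1 : ∀ n, 1 ≤ L n)
    (hLo : Tendsto (fun n => (L n : ℝ) / Real.log n) atTop (nhds 0)) :
    ∀ a > (0 : ℝ), ∀ ε > (0 : ℝ),
      Tendsto (fun n =>
        ((Measure.pi fun _ : Fin n × Fin (L n) => bern01 (c / (2 * L n)))
          {ω | ε < (largestComp n (L n) ω : ℝ) / (n : ℝ) ^ a}).toReal)
        atTop (nhds 0) := by
  intro a ha ε hε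
  have hbot := analysis_aux c a ε hc ha hε L hL1 hLo
  have hg : Tendsto (fun n : ℕ =>
      Real.exp (Real.log n - ((Nat.floor (ε * (n:ℝ) ^ a) / (L n) : ℕ) : ℝ)
        * Real.exp (-(c * L n)/2))) atTop (nhds 0) :=
    Real.tendsto_exp_atBot.comp hbot
  apply squeeze_zero' (Eventually.of_forall (fun n => ENNReal.toReal_nonneg)) ?_ hg
  -- eventual facts
  have hlog : Tendsto (fun n : ℕ => Real.log n) atTop atTop :=
    Real.tendsto_log_atTop.comp tendsto_natCast_atTop_atTop
  have hLn : ∀ᶠ n : ℕ in atTop, L n ≤ n := by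
    filter_upwards [hLo.eventually_lt_const one_pos, hlog.eventually_ge_atTop 1,
      eventually_ge_atTop 1] with n h1 h2 hn
    have hlogpos : (0:ℝ) < Real.log n := by linarith
    rw [div_lt_one hlogpos] at h1
    have h3 : Real.log n ≤ n := Real.log_le_self (by positivity)
    have : (L n : ℝ) ≤ (n : ℝ) := by linarith
    exact_mod_cast this
  have hfl : Tendsto (fun n : ℕ => ε * (n:ℝ) ^ a) atTop atTop :=
    Tendsto.const_mul_atTop hε ((tendsto_rpow_atTop ha).comp tendsto_natCast_atTop_atTop)
  filter_upwards [hLn, hfl.eventually_ge_atTop 1, eventually_ge_atTop 1] with n hLn1 hfl1 hn1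
  haveI : NeZero n := ⟨by omega⟩
  set m : ℕ := Nat.floor (ε * (n:ℝ)^a) + 1 with hm
  set r : ℕ := Nat.floor (ε * (n:ℝ)^a) / (L n) with hr
  set y : ℝ := Real.exp (-(c * L n)/2) with hy
  have hm2 : 2 ≤ m := by
    rw [hm]
    have : 1 ≤ Nat.floor (ε * (n:ℝ)^a) := Nat.le_floor (by exact_mod_cast hfl1)
    omega
  have hy0 : 0 ≤ y := le_of_lt (Real.exp_pos _)
  have hy1 : y ≤ 1 := Real.exp_le_one_iff.mpr (by
    have : (0:ℝ) ≤ c * L n := by positivity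
    linarith)
  have hev : {ω : Fin n × Fin (L n) → Bool |
        ε < (largestComp n (L n) ω : ℝ) / (n : ℝ) ^ a}
      = {ω | m ≤ largestComp n (L n) ω} := by
    ext ω
    simp only [Set.mem_setOf_eq]
    rw [lt_div_iff₀ (by positivity : (0:ℝ) < (n:ℝ)^a),
      ← Nat.floor_lt (by positivity : (0:ℝ) ≤ ε * (n:ℝ)^a)]
    rw [hm]
    omega
  rw [hev]
  by_cases hmn : m ≤ n
  · -- main bound
    set x : ℝ := c / (2 * (L n : ℝ)) with hx
    have hLpos : (0:ℝ) < (L n : ℝ) := by exact_mod_cast Nat.lt_of_lt_of_le Nat.zero_lt_one (hL1 n)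
    have hxpos : 0 ≤ x := by positivity
    have hbound := main_bound n (L n) (hL1 n) hLn1 (bern01 x) m hm2 hmn
    have hzpow : (bern01 x {false}) ^ (L n * L n) = ENNReal.ofReal y := by
      rw [bern01_false x hxpos, ← ENNReal.ofReal_pow (Real.exp_nonneg _), ← Real.exp_nat_mul]
      congr 1
      rw [hy, hx]
      push_cast
      field_simp
    have hQ : (1 : ℝ≥0∞) - ENNReal.ofReal y = ENNReal.ofReal (1 - y) := by
      rw [ENNReal.ofReal_sub _ hy0, ENNReal.ofReal_one]
    have hmr : (m - 1) / L n = r := by rw [hm, hr]; simp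
    rw [hzpow, hQ, hmr] at hbound
    have hofreal : (n : ℝ≥0∞) * ENNReal.ofReal (1 - y) ^ r
        = ENNReal.ofReal ((n : ℝ) * (1 - y) ^ r) := by
      rw [ENNReal.ofReal_mul (by positivity), ENNReal.ofReal_pow (by linarith),
        ENNReal.ofReal_natCast]
    rw [hofreal] at hbound
    have h1 : ((Measure.pi fun _ : Fin n × Fin (L n) => bern01 x)
        {ω | m ≤ largestComp n (L n) ω}).toReal ≤ (n : ℝ) * (1 - y) ^ r :=
      ENNReal.toReal_le_of_le_ofReal (by have h3 : (0:ℝ) ≤ 1 - y := by linarith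
                                         positivity) hbound
    refine le_trans h1 ?_
    have h2 : (1 - y) ^ r ≤ Real.exp (-y) ^ r :=
      pow_le_pow_left₀ (by linarith) (by linarith [Real.add_one_le_exp (-y)]) r
    calc (n : ℝ) * (1 - y) ^ r ≤ (n : ℝ) * Real.exp (-y) ^ r := by
          apply mul_le_mul_of_nonneg_left h2 (by positivity)
      _ = Real.exp (Real.log n - (r : ℝ) * y) := by
          rw [← Real.exp_nat_mul, ← Real.exp_log (by positivity : (0:ℝ) < (n:ℝ)),
            ← Real.exp_add]
          · congr 1
            rw [Real.log_exp]
            ring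
    done
  · -- event is empty
    push_neg at hmn
    have hempty : {ω : Fin n × Fin (L n) → Bool | m ≤ largestComp n (L n) ω} = ∅ := by
      ext ω
      simp only [Set.mem_setOf_eq, Set.mem_empty_iff_false, iff_false, not_le]
      exact lt_of_le_of_lt (largestComp_le n (L n) ω) hmn
    rw [hempty]
    simp only [measure_empty, ENNReal.toReal_zero]
    positivity
end

section
/- Under the same assumptions (ε_n → 0, t = cn/2), the number of components K_t is concentrated: K_t / E[K_t] → 1 in probability as n → ∞. -/
open MeasureTheory Filter

/-- The graph on `ℤ/nℤ` determined by the edge configuration `ω` on the potential edges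
`(i, k)` joining `i` to `i + k + 1 (mod n)`, for `0 ≤ k < n/2`. -/
def cycGraph' (n : ℕ) (ω : Fin n × Fin (n / 2) → Bool) : SimpleGraph (Fin n) :=
  SimpleGraph.fromRel fun x y =>
    ∃ e : Fin n × Fin (n / 2), ω e = true ∧ e.1 = x ∧ cycNbr e.1 e.2 = y

/-- The law of `G(cn/2)`: the edge of length `ℓ+1` at `i` has been opened at least once
by time `t = cn/2` with probability `1 - e^{-(c/2) p_{ℓ+1}}`, independently over edges. -/
noncomputable def cycMeasure (n : ℕ) (c : ℝ) (p : Fin (n / 2) → ℝ) :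
    Measure (Fin n × Fin (n / 2) → Bool) :=
  Measure.pi fun e => bern01 (c / 2 * p e.2)

/-- The number of connected components of the random graph. -/
noncomputable def numComponents (n : ℕ) (ω : Fin n × Fin (n / 2) → Bool) : ℕ :=
  Nat.card (cycGraph' n ω).ConnectedComponent

set_option linter.unusedSectionVars false
set_option maxHeartbeats 1000000

namespace CycAux
open SimpleGraph




variable {I : Type*} [Fintype I] [DecidableEq I]

/-- Expectation under product weights. -/
def PExp (q : I → Bool → ℝ) (f : (I → Bool) → ℝ) : ℝ :=
  ∑ τ : I → Bool, (∏ i, q i (τ i)) * f τ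

lemma sum_prod_pi (h : I → Bool → ℝ) :
    ∑ τ : I → Bool, ∏ i, h i (τ i) = ∏ i, ∑ b, h i b := by
  rw [Finset.prod_univ_sum (fun _ => (Finset.univ : Finset Bool)) h, Fintype.piFinset_univ]

variable {q : I → Bool → ℝ}

lemma weight_nonneg (hq0 : ∀ i b, 0 ≤ q i b) (τ : I → Bool) : 0 ≤ ∏ i, q i (τ i) :=
  Finset.prod_nonneg fun i _ => hq0 i (τ i)

lemma weight_sum_one (hq1 : ∀ i, q i false + q i true = 1) :
    ∑ τ : I → Bool, ∏ i, q i (τ i) = 1 := by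
  rw [sum_prod_pi]
  refine Finset.prod_eq_one fun i _ => ?_
  rw [Fintype.sum_bool]; linarith [hq1 i]

lemma PExp_mono (hq0 : ∀ i b, 0 ≤ q i b) {f g : (I → Bool) → ℝ}
    (h : ∀ ω, f ω ≤ g ω) : PExp q f ≤ PExp q g :=
  Finset.sum_le_sum fun τ _ => mul_le_mul_of_nonneg_left (h τ) (weight_nonneg hq0 τ)

lemma PExp_add (f g : (I → Bool) → ℝ) :
    PExp q (fun ω => f ω + g ω) = PExp q f + PExp q g := by
  simp [PExp, mul_add, Finset.sum_add_distrib]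

lemma PExp_sub (f g : (I → Bool) → ℝ) :
    PExp q (fun ω => f ω - g ω) = PExp q f - PExp q g := by
  simp [PExp, mul_sub, Finset.sum_sub_distrib]

lemma PExp_const_mul (a : ℝ) (f : (I → Bool) → ℝ) :
    PExp q (fun ω => a * f ω) = a * PExp q f := by
  simp only [PExp, Finset.mul_sum]
  exact Finset.sum_congr rfl fun τ _ => by ring

lemma PExp_const (hq1 : ∀ i, q i false + q i true = 1) (a : ℝ) :
    PExp q (fun _ => a) = a := by
  simp only [PExp]
  have : ∑ τ : I → Bool, (∏ i, q i (τ i)) * a = (∑ τ : I → Bool, ∏ i, q i (τ i)) * a := by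
    rw [Finset.sum_mul]
  rw [this, weight_sum_one hq1, one_mul]

lemma PExp_sum {J : Type*} (s : Finset J) (F : J → (I → Bool) → ℝ) :
    PExp q (fun ω => ∑ j ∈ s, F j ω) = ∑ j ∈ s, PExp q (F j) := by
  simp only [PExp, Finset.mul_sum]
  rw [Finset.sum_comm]

lemma PExp_sq_le (hq0 : ∀ i b, 0 ≤ q i b) (hq1 : ∀ i, q i false + q i true = 1)
    (f : (I → Bool) → ℝ) : (PExp q f) ^ 2 ≤ PExp q (fun ω => f ω ^ 2) := by
  have key := Finset.sum_mul_sq_le_sq_mul_sq Finset.univ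
    (fun τ : I → Bool => Real.sqrt (∏ i, q i (τ i)))
    (fun τ : I → Bool => Real.sqrt (∏ i, q i (τ i)) * f τ)
  have h1 : ∀ τ : I → Bool, Real.sqrt (∏ i, q i (τ i)) *
      (Real.sqrt (∏ i, q i (τ i)) * f τ) = (∏ i, q i (τ i)) * f τ := by
    intro τ
    rw [← mul_assoc, Real.mul_self_sqrt (weight_nonneg hq0 τ)]
  have h2 : ∀ τ : I → Bool, Real.sqrt (∏ i, q i (τ i)) ^ 2 = ∏ i, q i (τ i) := fun τ =>
    Real.sq_sqrt (weight_nonneg hq0 τ)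
  have h3 : ∀ τ : I → Bool, (Real.sqrt (∏ i, q i (τ i)) * f τ) ^ 2
      = (∏ i, q i (τ i)) * f τ ^ 2 := by
    intro τ; rw [mul_pow, h2]
  simp only [h1, h2, h3] at key
  calc (PExp q f) ^ 2 ≤ (∑ τ : I → Bool, ∏ i, q i (τ i)) *
        (∑ τ : I → Bool, (∏ i, q i (τ i)) * f τ ^ 2) := key
    _ = PExp q (fun ω => f ω ^ 2) := by rw [weight_sum_one hq1, one_mul]; rfl



lemma PExp_succ {m : ℕ} (q : Fin (m+1) → Bool → ℝ) (f : (Fin (m+1) → Bool) → ℝ) :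
    PExp q f = ∑ b, q 0 b * PExp (fun i => q i.succ) (fun τ => f (Fin.cons b τ)) := by
  unfold PExp
  rw [← Equiv.sum_comp (Fin.consEquiv (fun _ => Bool))
    (fun σ => (∏ i, q i (σ i)) * f σ), Fintype.sum_prod_type]
  refine Finset.sum_congr rfl fun b _ => ?_
  rw [Finset.mul_sum]
  refine Finset.sum_congr rfl fun τ _ => ?_
  have h : (Fin.consEquiv (fun _ => Bool)) (b, τ) = Fin.cons b τ := rfl
  rw [h, Fin.prod_univ_succ]
  simp only [Fin.cons_zero, Fin.cons_succ]
  ring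

/-- Efron–Stein inequality over `Fin m`. -/
theorem efron_stein_fin (m : ℕ) :
    ∀ (q : Fin m → Bool → ℝ), (∀ i b, 0 ≤ q i b) → (∀ i, q i false + q i true = 1) →
    ∀ f : (Fin m → Bool) → ℝ,
    PExp q (fun ω => f ω ^ 2) - (PExp q f) ^ 2 ≤
      ∑ i, PExp q (fun ω => q i false * q i true *
        (f (Function.update ω i true) - f (Function.update ω i false)) ^ 2) := by
  induction m with
  | zero =>
      intro q hq0 hq1 f
      have h1 : ∀ g : (Fin 0 → Bool) → ℝ, PExp q g = g default := by
        intro g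
        rw [PExp]
        rw [Finset.sum_eq_single_of_mem default (Finset.mem_univ _)
          (fun τ _ hne => absurd (Subsingleton.elim τ default) hne)]
        simp
      rw [h1, h1]
      simp
  | succ m ih =>
      intro q hq0 hq1 f
      have h0 := hq1 0
      have main : ∀ F : (Fin (m+1) → Bool) → ℝ, PExp q F
          = q 0 true * PExp (fun j => q j.succ) (fun τ => F (Fin.cons true τ))
            + q 0 false * PExp (fun j => q j.succ) (fun τ => F (Fin.cons false τ)) := by
        intro F; rw [PExp_succ q F, Fintype.sum_bool]
      have hIHt := ih (fun j => q j.succ) (fun i b => hq0 _ _) (fun i => hq1 _)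
        (fun τ => f (Fin.cons true τ))
      have hIHf := ih (fun j => q j.succ) (fun i b => hq0 _ _) (fun i => hq1 _)
        (fun τ => f (Fin.cons false τ))
      simp only [PExp_const_mul] at hIHt hIHf
      have hJ : (PExp (fun j => q j.succ) (fun τ => f (Fin.cons true τ))
            - PExp (fun j => q j.succ) (fun τ => f (Fin.cons false τ))) ^ 2
          ≤ PExp (fun j => q j.succ)
              (fun τ => (f (Fin.cons true τ) - f (Fin.cons false τ)) ^ 2) := by
        rw [← PExp_sub]
        exact PExp_sq_le (fun i b => hq0 _ _) (fun i => hq1 _) _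
      simp only [Fin.sum_univ_succ, main, Fin.update_cons_zero, ← Fin.cons_update,
        PExp_const_mul]
      rw [Finset.sum_add_distrib, ← Finset.mul_sum, ← Finset.mul_sum]
      set qt := q 0 true
      set qf := q 0 false
      set y := PExp (fun j => q j.succ) (fun τ => f (Fin.cons true τ))
      set x := PExp (fun j => q j.succ) (fun τ => f (Fin.cons false τ))
      set J := PExp (fun j => q j.succ)
          (fun τ => (f (Fin.cons true τ) - f (Fin.cons false τ)) ^ 2)
      have c1 : (0:ℝ) ≤ qt := hq0 0 true
      have c2 : (0:ℝ) ≤ qf := hq0 0 false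
      have p1 := mul_le_mul_of_nonneg_left hIHt c1
      have p2 := mul_le_mul_of_nonneg_left hIHf c2
      have p3 := mul_le_mul_of_nonneg_left hJ (mul_nonneg c2 c1)
      have e1 : (qf + qt) * (qt * y^2 + qf * x^2) = 1 * (qt * y^2 + qf * x^2) := by
        rw [h0]
      have e2 : (qf + qt) * (qf * qt * J) = 1 * (qf * qt * J) := by rw [h0]
      nlinarith [p1, p2, p3, e1, e2]

/-- Change of index by an equivalence. -/
lemma PExp_reindex {I J : Type*} [Fintype I] [DecidableEq I] [Fintype J] [DecidableEq J]
    (e : I ≃ J) (q : J → Bool → ℝ) (f : (J → Bool) → ℝ) :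
    PExp q f = PExp (fun i => q (e i)) (fun τ => f (τ ∘ e.symm)) := by
  unfold PExp
  refine Fintype.sum_bijective (fun (ω : J → Bool) => ω ∘ e) ?_
    (fun ω => (∏ a, q a (ω a)) * f ω)
    (fun τ => (∏ i, q (e i) (τ i)) * f (τ ∘ e.symm)) fun ω => ?_
  · constructor
    · intro ω₁ ω₂ h
      funext a
      have := congrFun h (e.symm a)
      simpa using this
    · intro τ
      exact ⟨τ ∘ e.symm, by funext i; simp⟩
  · have h1 : (∏ i, q (e i) (ω (e i))) = ∏ a, q a (ω a) := Equiv.prod_comp e fun a => q a (ω a)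
    have h2 : (ω ∘ ⇑e) ∘ ⇑e.symm = ω := by funext a; simp
    simp only [Function.comp_apply, h2, h1]

/-- Efron–Stein inequality, general finite index. -/
theorem efron_stein {I : Type*} [Fintype I] [DecidableEq I]
    (q : I → Bool → ℝ) (hq0 : ∀ i b, 0 ≤ q i b) (hq1 : ∀ i, q i false + q i true = 1)
    (f : (I → Bool) → ℝ) :
    PExp q (fun ω => f ω ^ 2) - (PExp q f) ^ 2 ≤
      ∑ i, PExp q (fun ω => q i false * q i true *
        (f (Function.update ω i true) - f (Function.update ω i false)) ^ 2) := by
  classical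
  set m := Fintype.card I
  set e : Fin m ≃ I := (Fintype.equivFin I).symm with he
  have key := efron_stein_fin m (fun j => q (e j)) (fun j b => hq0 _ _) (fun j => hq1 _)
    (fun τ => f (τ ∘ e.symm))
  have h1 : PExp q f = PExp (fun j => q (e j)) (fun τ => f (τ ∘ e.symm)) := PExp_reindex e q f
  have h2 : PExp q (fun ω => f ω ^ 2)
      = PExp (fun j => q (e j)) (fun τ => f (τ ∘ e.symm) ^ 2) := PExp_reindex e q _
  have h3 : ∀ j : Fin m,
      PExp (fun j' => q (e j')) (fun τ => q (e j) false * q (e j) true *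
        (f (Function.update τ j true ∘ e.symm) - f (Function.update τ j false ∘ e.symm)) ^ 2)
      = PExp q (fun ω => q (e j) false * q (e j) true *
        (f (Function.update ω (e j) true) - f (Function.update ω (e j) false)) ^ 2) := by
    intro j
    rw [PExp_reindex e q (fun ω => q (e j) false * q (e j) true *
        (f (Function.update ω (e j) true) - f (Function.update ω (e j) false)) ^ 2)]
    congr 1
    funext τ
    have hu : ∀ v : Bool, Function.update τ j v ∘ ⇑e.symm
        = Function.update (τ ∘ ⇑e.symm) (e j) v := by
      intro v
      have h := Function.update_comp_equiv τ e.symm j v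
      simpa using h
    simp only [hu]
  rw [h1, h2]
  refine key.trans ?_
  rw [← Equiv.sum_comp e (fun i => PExp q (fun ω => q i false * q i true *
    (f (Function.update ω i true) - f (Function.update ω i false)) ^ 2))]
  exact le_of_eq (Finset.sum_congr rfl fun j _ => h3 j)

/-- Chebyshev-type bound. -/
lemma PExp_cheb {I : Type*} [Fintype I] [DecidableEq I]
    (q : I → Bool → ℝ) (hq0 : ∀ i b, 0 ≤ q i b) (hq1 : ∀ i, q i false + q i true = 1)
    (f : (I → Bool) → ℝ) (a : ℝ) (ha : 0 < a) :
    PExp q (fun ω => if a < |f ω - PExp q f| then (1:ℝ) else 0)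
      ≤ (PExp q (fun ω => f ω ^ 2) - (PExp q f) ^ 2) / a ^ 2 := by
  classical
  set M := PExp q f with hM
  have hvar : PExp q (fun ω => (f ω - M) ^ 2)
      = PExp q (fun ω => f ω ^ 2) - M ^ 2 := by
    have hfe : (fun ω => (f ω - M) ^ 2)
        = fun ω => f ω ^ 2 - (2 * M * f ω - M ^ 2) := by
      funext ω; ring
    rw [hfe, PExp_sub, PExp_sub, PExp_const_mul, PExp_const hq1 (M ^ 2), ← hM]
    ring
  have hpt : ∀ ω : I → Bool, (if a < |f ω - M| then (1:ℝ) else 0)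
      ≤ (1 / a ^ 2) * (f ω - M) ^ 2 := by
    intro ω
    by_cases h : a < |f ω - M|
    · rw [if_pos h]
      have h2 : a ^ 2 ≤ (f ω - M) ^ 2 := by
        have h3 := abs_nonneg (f ω - M)
        have h4 : a ^ 2 ≤ |f ω - M| ^ 2 := by nlinarith
        rwa [sq_abs] at h4
      calc (1:ℝ) = (1 / a ^ 2) * a ^ 2 := by field_simp
        _ ≤ (1 / a ^ 2) * (f ω - M) ^ 2 :=
            mul_le_mul_of_nonneg_left h2 (by positivity)
    · rw [if_neg h]
      positivity
  calc PExp q (fun ω => if a < |f ω - M| then (1:ℝ) else 0)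
      ≤ PExp q (fun ω => (1 / a ^ 2) * (f ω - M) ^ 2) := PExp_mono hq0 hpt
    _ = (1 / a ^ 2) * PExp q (fun ω => (f ω - M) ^ 2) := PExp_const_mul _ _
    _ = (PExp q (fun ω => f ω ^ 2) - (PExp q f) ^ 2) / a ^ 2 := by
        rw [hvar, ← hM]; ring


open SimpleGraph

lemma card_cc_le_of_le {V : Type*} [Finite V] {G G' : SimpleGraph V} (h : G ≤ G') :
    Nat.card G'.ConnectedComponent ≤ Nat.card G.ConnectedComponent := by
  apply Nat.card_le_card_of_surjective (ConnectedComponent.map (Hom.ofLE h))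
  intro c'
  refine c'.ind fun v => ?_
  exact ⟨G.connectedComponentMk v, by simp [ConnectedComponent.map_mk]⟩

lemma reachable_cases {V : Type*} {G G' : SimpleGraph V} (x y : V)
    (hadj : ∀ a b, G'.Adj a b → G.Adj a b ∨ (a = x ∧ b = y) ∨ (a = y ∧ b = x)) :
    ∀ {a b : V}, G'.Reachable a b → G.Reachable a b ∨
      ((G.Reachable a x ∨ G.Reachable a y) ∧ (G.Reachable b x ∨ G.Reachable b y)) := by
  intro a b hab
  obtain ⟨w⟩ := hab
  induction w with
  | nil => exact Or.inl (Reachable.refl _)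
  | @cons u u' b huu' p ih =>
      rcases hadj _ _ huu' with hG | ⟨rfl, rfl⟩ | ⟨rfl, rfl⟩
      · have r : G.Reachable u u' := hG.reachable
        rcases ih with hr | ⟨ha', hb⟩
        · exact Or.inl (r.trans hr)
        · exact Or.inr ⟨ha'.imp r.trans r.trans, hb⟩
      · rcases ih with hr | ⟨ha', hb⟩
        · exact Or.inr ⟨Or.inl (Reachable.refl _), Or.inr hr.symm⟩
        · exact Or.inr ⟨Or.inl (Reachable.refl _), hb⟩
      · rcases ih with hr | ⟨ha', hb⟩
        · exact Or.inr ⟨Or.inr (Reachable.refl _), Or.inl hr.symm⟩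
        · exact Or.inr ⟨Or.inr (Reachable.refl _), hb⟩

lemma card_cc_le_add_one {V : Type*} [Finite V] {G G' : SimpleGraph V} (h : G ≤ G') (x y : V)
    (hadj : ∀ a b, G'.Adj a b → G.Adj a b ∨ (a = x ∧ b = y) ∨ (a = y ∧ b = x)) :
    Nat.card G.ConnectedComponent ≤ Nat.card G'.ConnectedComponent + 1 := by
  classical
  cases nonempty_fintype V
  letI : Fintype G.ConnectedComponent := Fintype.ofFinite _
  letI : Fintype G'.ConnectedComponent := Fintype.ofFinite _
  rw [Nat.card_eq_fintype_card, Nat.card_eq_fintype_card]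
  set φ : G.ConnectedComponent → G'.ConnectedComponent :=
    ConnectedComponent.map (Hom.ofLE h) with hφ
  set cy := G.connectedComponentMk y with hcy
  set cx := G.connectedComponentMk x with hcx
  have key : ∀ A B : G.ConnectedComponent, A ≠ cy → B ≠ cy → φ A = φ B → A = B := by
    refine ConnectedComponent.ind₂ fun a b hA hB hab => ?_
    have hr : G'.Reachable a b := by
      have : G'.connectedComponentMk a = G'.connectedComponentMk b := by
        simpa [hφ, ConnectedComponent.map_mk] using hab
      exact (ConnectedComponent.eq).mp this
    rcases reachable_cases x y hadj hr with hG | ⟨ha, hb⟩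
    · exact ConnectedComponent.eq.mpr hG
    · have hax : G.Reachable a x := by
        rcases ha with h' | h'
        · exact h'
        · exact absurd (ConnectedComponent.eq.mpr h') hA
      have hbx : G.Reachable b x := by
        rcases hb with h' | h'
        · exact h'
        · exact absurd (ConnectedComponent.eq.mpr h') hB
      exact ConnectedComponent.eq.mpr (hax.trans hbx.symm)
  have h1 : (Finset.univ.erase cy).card ≤ Fintype.card G'.ConnectedComponent := by
    refine Finset.card_le_card_of_injOn φ (fun A _ => Finset.mem_univ _) ?_
    intro A hA B hB hab
    exact key A B (Finset.ne_of_mem_erase hA) (Finset.ne_of_mem_erase hB) hab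
  have h2 : Fintype.card G.ConnectedComponent = (Finset.univ.erase cy).card + 1 := by
    rw [Finset.card_erase_add_one (Finset.mem_univ _), Finset.card_univ]
  omega



-- update lemmas for cycGraph'
lemma cycGraph_le (n : ℕ) (ω : Fin n × Fin (n / 2) → Bool) (e : Fin n × Fin (n / 2)) :
    cycGraph' n (Function.update ω e false) ≤ cycGraph' n (Function.update ω e true) := by
  intro a b hab
  rw [cycGraph', SimpleGraph.fromRel_adj] at hab ⊢
  obtain ⟨hne, hrel⟩ := hab
  refine ⟨hne, ?_⟩
  have : ∀ x y : Fin n, (∃ e' : Fin n × Fin (n/2), (Function.update ω e false) e' = true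
        ∧ e'.1 = x ∧ cycNbr e'.1 e'.2 = y)
      → (∃ e' : Fin n × Fin (n/2), (Function.update ω e true) e' = true
        ∧ e'.1 = x ∧ cycNbr e'.1 e'.2 = y) := by
    rintro x y ⟨e', ht, h1, h2⟩
    by_cases he : e' = e
    · subst he
      simp [Function.update_self] at ht
    · refine ⟨e', ?_, h1, h2⟩
      rwa [Function.update_of_ne he] at ht ⊢
  exact hrel.imp (this a b) (this b a)

lemma cycGraph_adj_cases (n : ℕ) (ω : Fin n × Fin (n / 2) → Bool) (e : Fin n × Fin (n / 2))
    (a b : Fin n) (hab : (cycGraph' n (Function.update ω e true)).Adj a b) :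
    (cycGraph' n (Function.update ω e false)).Adj a b
      ∨ (a = e.1 ∧ b = cycNbr e.1 e.2) ∨ (a = cycNbr e.1 e.2 ∧ b = e.1) := by
  rw [cycGraph', SimpleGraph.fromRel_adj] at hab
  obtain ⟨hne, hrel⟩ := hab
  have key : ∀ x y : Fin n, (∃ e' : Fin n × Fin (n/2), (Function.update ω e true) e' = true
        ∧ e'.1 = x ∧ cycNbr e'.1 e'.2 = y)
      → (∃ e' : Fin n × Fin (n/2), (Function.update ω e false) e' = true
        ∧ e'.1 = x ∧ cycNbr e'.1 e'.2 = y) ∨ (x = e.1 ∧ y = cycNbr e.1 e.2) := by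
    rintro x y ⟨e', ht, h1, h2⟩
    by_cases he : e' = e
    · subst he
      exact Or.inr ⟨h1.symm, h2.symm⟩
    · rw [Function.update_of_ne he] at ht
      exact Or.inl ⟨e', by rwa [Function.update_of_ne he], h1, h2⟩
  rcases hrel with h | h
  · rcases key a b h with h' | h'
    · exact Or.inl (by rw [cycGraph', SimpleGraph.fromRel_adj]; exact ⟨hne, Or.inl h'⟩)
    · exact Or.inr (Or.inl h')
  · rcases key b a h with h' | h'
    · exact Or.inl (by rw [cycGraph', SimpleGraph.fromRel_adj]; exact ⟨hne, Or.inr h'⟩)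
    · exact Or.inr (Or.inr ⟨h'.2, h'.1⟩)



lemma isolated_card_le (n : ℕ) (ω : Fin n × Fin (n / 2) → Bool) :
    (Finset.univ.filter (fun v : Fin n => ∀ e : Fin n × Fin (n/2),
      (e.1 = v ∨ cycNbr e.1 e.2 = v) → ω e = false)).card ≤ numComponents n ω := by
  classical
  letI : Fintype (cycGraph' n ω).ConnectedComponent := Fintype.ofFinite _
  rw [numComponents, Nat.card_eq_fintype_card, ← Finset.card_univ]
  refine Finset.card_le_card_of_injOn
    (fun v => (cycGraph' n ω).connectedComponentMk v)
    (fun v _ => Finset.mem_univ _) ?_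
  intro v hv w hw heq
  have hPv : ∀ e : Fin n × Fin (n/2), (e.1 = v ∨ cycNbr e.1 e.2 = v) → ω e = false :=
    (Finset.mem_filter.mp hv).2
  have hr : (cycGraph' n ω).Reachable v w := ConnectedComponent.eq.mp heq
  obtain ⟨walk⟩ := hr
  cases walk with
  | nil => rfl
  | cons hadj p =>
      exfalso
      rw [cycGraph', SimpleGraph.fromRel_adj] at hadj
      obtain ⟨hne, hrel⟩ := hadj
      rcases hrel with ⟨e, ht, h1, h2⟩ | ⟨e, ht, h1, h2⟩
      · rw [hPv e (Or.inl h1)] at ht; exact Bool.false_ne_true ht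
      · rw [hPv e (Or.inr h2)] at ht; exact Bool.false_ne_true ht



noncomputable def qw (n : ℕ) (c : ℝ) (p : Fin (n/2) → ℝ)
    (e : Fin n × Fin (n/2)) (b : Bool) : ℝ :=
  ((bern01 (c/2 * p e.2)) {b}).toReal

instance bern01_prob (x : ℝ) : IsProbabilityMeasure (bern01 x) := by
  unfold bern01; infer_instance

instance cycMeasure_prob (n : ℕ) (c : ℝ) (p : Fin (n/2) → ℝ) :
    IsProbabilityMeasure (cycMeasure n c p) := by
  unfold cycMeasure; infer_instance

lemma bern01_false {x : ℝ} (hx : 0 ≤ x) : (bern01 x {false}).toReal = Real.exp (-x) := by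
  have hle : Real.exp (-x) ≤ 1 := by
    rw [← Real.exp_zero]; exact Real.exp_le_exp.mpr (by linarith)
  have h1 : (0:ℝ) ≤ 1 - Real.exp (-x) := by linarith
  rw [bern01, PMF.toMeasure_apply_singleton _ _ (measurableSet_singleton _),
    PMF.bernoulli_apply]
  simp only [cond]
  rw [ENNReal.coe_toReal, NNReal.coe_sub (Real.toNNReal_le_one.mpr (by linarith [Real.exp_pos (-x)])),
    Real.coe_toNNReal _ h1]
  push_cast; ring

lemma bern01_true {x : ℝ} (hx : 0 ≤ x) : (bern01 x {true}).toReal = 1 - Real.exp (-x) := by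
  have hle : Real.exp (-x) ≤ 1 := by
    rw [← Real.exp_zero]; exact Real.exp_le_exp.mpr (by linarith)
  have h1 : (0:ℝ) ≤ 1 - Real.exp (-x) := by linarith
  rw [bern01, PMF.toMeasure_apply_singleton _ _ (measurableSet_singleton _),
    PMF.bernoulli_apply]
  simp only [cond]
  rw [ENNReal.coe_toReal, Real.coe_toNNReal _ h1]

lemma cycMeasure_singleton (n : ℕ) (c : ℝ) (p : Fin (n/2) → ℝ)
    (ω : Fin n × Fin (n/2) → Bool) :
    ((cycMeasure n c p) {ω}).toReal = ∏ e, qw n c p e (ω e) := by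
  rw [← Set.univ_pi_singleton ω, cycMeasure, Measure.pi_pi, ENNReal.toReal_prod]
  rfl

lemma cycIntegral (n : ℕ) (c : ℝ) (p : Fin (n/2) → ℝ) (f : (Fin n × Fin (n/2) → Bool) → ℝ) :
    ∫ ω, f ω ∂(cycMeasure n c p) = PExp (qw n c p) f := by
  rw [integral_fintype Integrable.of_finite]
  unfold PExp
  refine Finset.sum_congr rfl fun ω _ => ?_
  rw [measureReal_def, cycMeasure_singleton, smul_eq_mul]

lemma cycMeasure_set (n : ℕ) (c : ℝ) (p : Fin (n/2) → ℝ) (A : Set (Fin n × Fin (n/2) → Bool)) :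
    ((cycMeasure n c p) A).toReal = PExp (qw n c p) (A.indicator fun _ => (1:ℝ)) := by
  rw [← measureReal_def, ← integral_indicator_one A.toFinite.measurableSet, cycIntegral]
  rfl


lemma main_bound (c : ℝ) (hc : 0 < c) (n : ℕ) (hn : 2 ≤ n) (p : Fin (n/2) → ℝ)
    (hnn : ∀ ℓ, 0 ≤ p ℓ) (hsum : ∑ ℓ, p ℓ = 1) (δ : ℝ) (hδ : 0 < δ) :
    ((cycMeasure n c p) {ω | δ < |(numComponents n ω : ℝ) /
        (∫ ω', (numComponents n ω' : ℝ) ∂cycMeasure n c p) - 1|}).toReal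
      ≤ (c * Real.exp (2*c) / (2 * δ^2)) / n := by
  classical
  set K : (Fin n × Fin (n/2) → Bool) → ℝ := fun ω => (numComponents n ω : ℝ) with hK
  set q : (Fin n × Fin (n/2)) → Bool → ℝ := qw n c p with hq
  -- basic weight facts
  have hx : ∀ e : Fin n × Fin (n/2), 0 ≤ c/2 * p e.2 :=
    fun e => mul_nonneg (by linarith) (hnn _)
  have hqf : ∀ e, q e false = Real.exp (-(c/2 * p e.2)) := fun e => bern01_false (hx e)
  have hqt : ∀ e, q e true = 1 - Real.exp (-(c/2 * p e.2)) := fun e => bern01_true (hx e)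
  have hexple : ∀ e : Fin n × Fin (n/2), Real.exp (-(c/2 * p e.2)) ≤ 1 := by
    intro e
    rw [← Real.exp_zero]
    exact Real.exp_le_exp.mpr (by linarith [hx e])
  have hq0 : ∀ e b, 0 ≤ q e b := by
    intro e b
    cases b
    · rw [hqf]; positivity
    · rw [hqt]; linarith [hexple e]
  have hq1 : ∀ e, q e false + q e true = 1 := by
    intro e; rw [hqf, hqt]; ring
  set M := PExp q K with hM
  have hMint : ∫ ω', (numComponents n ω' : ℝ) ∂cycMeasure n c p = M := cycIntegral n c p K
  have hn0 : (0:ℝ) < n := by positivity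
  -- mean lower bound
  have hMlb : (n:ℝ) * Real.exp (-c) ≤ M := by
    set g : Fin n → (Fin n × Fin (n/2)) → Bool → ℝ := fun v e b =>
      if e.1 = v ∨ cycNbr e.1 e.2 = v then (if b = false then (1:ℝ) else 0) else 1 with hg
    have hgnn : ∀ v e b, 0 ≤ g v e b := by
      intro v e b; rw [hg]; dsimp only; split_ifs <;> norm_num
    -- pointwise: sum of indicators ≤ K
    have hpt : ∀ ω, ∑ v, (∏ e, g v e (ω e)) ≤ K ω := by
      intro ω
      have hind : ∀ v, (∏ e, g v e (ω e)) = if (∀ e : Fin n × Fin (n/2),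
          (e.1 = v ∨ cycNbr e.1 e.2 = v) → ω e = false) then (1:ℝ) else 0 := by
        intro v
        by_cases h : ∀ e : Fin n × Fin (n/2), (e.1 = v ∨ cycNbr e.1 e.2 = v) → ω e = false
        · rw [if_pos h]
          refine Finset.prod_eq_one fun e _ => ?_
          rw [hg]; dsimp only
          by_cases hce : e.1 = v ∨ cycNbr e.1 e.2 = v
          · rw [if_pos hce, if_pos (h e hce)]
          · rw [if_neg hce]
        · rw [if_neg h]
          push_neg at h
          obtain ⟨e, hce, hne⟩ := h
          refine Finset.prod_eq_zero (Finset.mem_univ e) ?_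
          rw [hg]; dsimp only
          rw [if_pos hce, if_neg hne]
      calc ∑ v, (∏ e, g v e (ω e))
          = ∑ v, (if (∀ e : Fin n × Fin (n/2),
              (e.1 = v ∨ cycNbr e.1 e.2 = v) → ω e = false) then (1:ℝ) else 0) :=
            Finset.sum_congr rfl fun v _ => hind v
        _ = ((Finset.univ.filter (fun v : Fin n => ∀ e : Fin n × Fin (n/2),
              (e.1 = v ∨ cycNbr e.1 e.2 = v) → ω e = false)).card : ℝ) := by
            rw [Finset.sum_boole]
        _ ≤ K ω := by
            rw [hK]
            exact_mod_cast Nat.cast_le.mpr (isolated_card_le n ω)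
    -- expectation of each indicator
    have hEind : ∀ v : Fin n, Real.exp (-c) ≤ PExp q (fun ω => ∏ e, g v e (ω e)) := by
      intro v
      set S : Finset (Fin n × Fin (n/2)) :=
        Finset.univ.filter (fun e => e.1 = v ∨ cycNbr e.1 e.2 = v) with hS
      have hfact : PExp q (fun ω => ∏ e, g v e (ω e))
          = ∏ e, (q e true * g v e true + q e false * g v e false) := by
        unfold PExp
        calc ∑ τ : (Fin n × Fin (n/2)) → Bool, (∏ e, q e (τ e)) * ∏ e, g v e (τ e)
            = ∑ τ : (Fin n × Fin (n/2)) → Bool, ∏ e, (q e (τ e) * g v e (τ e)) := by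
              refine Finset.sum_congr rfl fun τ _ => ?_
              rw [← Finset.prod_mul_distrib]
          _ = ∏ e, ∑ b, q e b * g v e b := sum_prod_pi (fun e b => q e b * g v e b)
          _ = ∏ e, (q e true * g v e true + q e false * g v e false) := by
              refine Finset.prod_congr rfl fun e _ => ?_
              rw [Fintype.sum_bool]
      have hfact2 : ∀ e : Fin n × Fin (n/2),
          (q e true * g v e true + q e false * g v e false)
          = if e.1 = v ∨ cycNbr e.1 e.2 = v then q e false else 1 := by
        intro e
        rw [hg]; dsimp only
        by_cases hce : e.1 = v ∨ cycNbr e.1 e.2 = v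
        · rw [if_pos hce, if_pos hce, if_pos hce]
          norm_num
        · rw [if_neg hce, if_neg hce, if_neg hce]
          rw [mul_one, mul_one, add_comm]
          exact hq1 e
      have hprod : PExp q (fun ω => ∏ e, g v e (ω e)) = ∏ e ∈ S, q e false := by
        rw [hfact]
        rw [Finset.prod_congr rfl fun e _ => hfact2 e]
        rw [hS, Finset.prod_filter]
      -- sum of p over S is at most 2
      have hSsum : ∑ e ∈ S, (c/2 * p e.2) ≤ c := by
        have hA : ∑ e ∈ Finset.univ.filter (fun e : Fin n × Fin (n/2) => e.1 = v),
            p e.2 = 1 := by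
          have : Finset.univ.filter (fun e : Fin n × Fin (n/2) => e.1 = v)
              = {v} ×ˢ Finset.univ := by
            ext e
            simp only [Finset.mem_filter, Finset.mem_univ, true_and,
              Finset.mem_product, Finset.mem_singleton, and_true]
          rw [this, Finset.sum_product, Finset.sum_singleton, hsum]
        have hB : ∑ e ∈ Finset.univ.filter
            (fun e : Fin n × Fin (n/2) => cycNbr e.1 e.2 = v), p e.2 ≤ 1 := by
          set B := Finset.univ.filter
            (fun e : Fin n × Fin (n/2) => cycNbr e.1 e.2 = v) with hBdef
          have hinj : ∀ x ∈ B, ∀ y ∈ B, x.2 = y.2 → x = y := by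
            intro x hx y hy hxy
            have hxv : cycNbr x.1 x.2 = v := (Finset.mem_filter.mp hx).2
            have hyv : cycNbr y.1 y.2 = v := (Finset.mem_filter.mp hy).2
            have h2 : cycNbr x.1 x.2 = cycNbr y.1 y.2 := by rw [hxv, hyv]
            have hval : (x.1.val + x.2.val + 1) % n = (y.1.val + y.2.val + 1) % n := by
              have := congrArg Fin.val h2
              simpa [cycNbr] using this
            have hmod : x.1.val ≡ y.1.val [MOD n] := by
              refine Nat.ModEq.add_right_cancel' (x.2.val + 1) ?_
              rw [Nat.ModEq]
              rw [hxy] at hval ⊢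
              rw [← add_assoc, ← add_assoc]
              exact hval
            have : x.1.val = y.1.val := by
              have hlt1 := x.1.isLt
              have hlt2 := y.1.isLt
              rw [Nat.ModEq, Nat.mod_eq_of_lt hlt1, Nat.mod_eq_of_lt hlt2] at hmod
              exact hmod
            exact Prod.ext (Fin.ext this) hxy
          calc ∑ e ∈ B, p e.2 = ∑ k ∈ B.image Prod.snd, p k := (Finset.sum_image hinj).symm
            _ ≤ ∑ k, p k := Finset.sum_le_sum_of_subset_of_nonneg
                (Finset.subset_univ _) (fun k _ _ => hnn k)
            _ = 1 := hsum
        have hsub : S ⊆ (Finset.univ.filter (fun e : Fin n × Fin (n/2) => e.1 = v))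
            ∪ (Finset.univ.filter (fun e : Fin n × Fin (n/2) => cycNbr e.1 e.2 = v)) := by
          intro e he
          rw [hS, Finset.mem_filter] at he
          rw [Finset.mem_union, Finset.mem_filter, Finset.mem_filter]
          tauto
        have h1 : ∑ e ∈ S, p e.2 ≤ 2 := by
          calc ∑ e ∈ S, p e.2
              ≤ ∑ e ∈ (Finset.univ.filter (fun e : Fin n × Fin (n/2) => e.1 = v))
                ∪ (Finset.univ.filter (fun e : Fin n × Fin (n/2) => cycNbr e.1 e.2 = v)),
                p e.2 := Finset.sum_le_sum_of_subset_of_nonneg hsub (fun e _ _ => hnn e.2)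
            _ ≤ 2 := by
                have := Finset.sum_union_inter (s₁ := Finset.univ.filter
                    (fun e : Fin n × Fin (n/2) => e.1 = v))
                  (s₂ := Finset.univ.filter
                    (fun e : Fin n × Fin (n/2) => cycNbr e.1 e.2 = v))
                  (f := fun e => p e.2)
                have hint : 0 ≤ ∑ e ∈ (Finset.univ.filter
                    (fun e : Fin n × Fin (n/2) => e.1 = v))
                    ∩ (Finset.univ.filter
                    (fun e : Fin n × Fin (n/2) => cycNbr e.1 e.2 = v)), p e.2 :=
                  Finset.sum_nonneg fun e _ => hnn e.2
                linarith [hA, hB]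
        calc ∑ e ∈ S, (c/2 * p e.2) = c/2 * ∑ e ∈ S, p e.2 := by rw [Finset.mul_sum]
          _ ≤ c/2 * 2 := by
              apply mul_le_mul_of_nonneg_left h1 (by linarith)
          _ = c := by ring
      rw [hprod]
      calc Real.exp (-c) ≤ Real.exp (-(∑ e ∈ S, (c/2 * p e.2))) :=
            Real.exp_le_exp.mpr (by linarith)
        _ = ∏ e ∈ S, Real.exp (-(c/2 * p e.2)) := by
            rw [← Real.exp_sum]
            congr 1
            rw [Finset.sum_neg_distrib]
        _ = ∏ e ∈ S, q e false := Finset.prod_congr rfl fun e _ => (hqf e).symm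
    calc (n:ℝ) * Real.exp (-c) = ∑ _v : Fin n, Real.exp (-c) := by
          rw [Finset.sum_const, Finset.card_univ, Fintype.card_fin, nsmul_eq_mul]
      _ ≤ ∑ v, PExp q (fun ω => ∏ e, g v e (ω e)) := Finset.sum_le_sum fun v _ => hEind v
      _ = PExp q (fun ω => ∑ v, ∏ e, g v e (ω e)) := (PExp_sum _ _).symm
      _ ≤ PExp q K := PExp_mono hq0 hpt
  have hMpos : 0 < M := lt_of_lt_of_le (by positivity) hMlb
  -- variance bound
  have hvar : PExp q (fun ω => K ω ^ 2) - M ^ 2 ≤ c * n / 2 := by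
    refine (efron_stein q hq0 hq1 K).trans ?_
    have hterm : ∀ e : Fin n × Fin (n/2),
        PExp q (fun ω => q e false * q e true *
          (K (Function.update ω e true) - K (Function.update ω e false)) ^ 2)
        ≤ c/2 * p e.2 := by
      intro e
      have hptw : ∀ ω, q e false * q e true *
          (K (Function.update ω e true) - K (Function.update ω e false)) ^ 2
          ≤ q e false * q e true := by
        intro ω
        have h1 : numComponents n (Function.update ω e true)
            ≤ numComponents n (Function.update ω e false) :=
          card_cc_le_of_le (cycGraph_le n ω e)
        have h2 : numComponents n (Function.update ω e false)
            ≤ numComponents n (Function.update ω e true) + 1 :=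
          card_cc_le_add_one (cycGraph_le n ω e) e.1 (cycNbr e.1 e.2)
            (cycGraph_adj_cases n ω e)
        have hsq : (K (Function.update ω e true) - K (Function.update ω e false)) ^ 2 ≤ 1 := by
          rw [hK]
          have h1' : (numComponents n (Function.update ω e true) : ℝ)
              ≤ (numComponents n (Function.update ω e false) : ℝ) := by exact_mod_cast h1
          have h2' : (numComponents n (Function.update ω e false) : ℝ)
              ≤ (numComponents n (Function.update ω e true) : ℝ) + 1 := by exact_mod_cast h2
          nlinarith
        nlinarith [mul_nonneg (hq0 e false) (hq0 e true), hsq,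
          mul_le_mul_of_nonneg_left hsq (mul_nonneg (hq0 e false) (hq0 e true))]
      calc PExp q (fun ω => q e false * q e true *
            (K (Function.update ω e true) - K (Function.update ω e false)) ^ 2)
          ≤ PExp q (fun _ => q e false * q e true) := PExp_mono hq0 hptw
        _ = q e false * q e true := PExp_const hq1 _
        _ ≤ q e true := by
            nlinarith [hq0 e true, hqf e, hexple e, Real.exp_pos (-(c/2 * p e.2))]
        _ ≤ c/2 * p e.2 := by
            rw [hqt]
            linarith [Real.add_one_le_exp (-(c/2 * p e.2))]
    calc ∑ e : Fin n × Fin (n/2), PExp q (fun ω => q e false * q e true *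
          (K (Function.update ω e true) - K (Function.update ω e false)) ^ 2)
        ≤ ∑ e : Fin n × Fin (n/2), c/2 * p e.2 := Finset.sum_le_sum fun e _ => hterm e
      _ = c * n / 2 := by
          rw [Fintype.sum_prod_type]
          have : ∀ i : Fin n, ∑ k, c/2 * p k = c/2 := by
            intro i
            rw [← Finset.mul_sum, hsum, mul_one]
          rw [Finset.sum_congr rfl fun i _ => this i, Finset.sum_const, Finset.card_univ,
            Fintype.card_fin, nsmul_eq_mul]
          ring
  -- Chebyshev
  simp only [show integral (cycMeasure n c p) K = M from hMint]
  rw [cycMeasure_set]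
  have hptT : ∀ ω, ({ω | δ < |K ω / M - 1|}.indicator (fun _ => (1:ℝ))) ω
      ≤ (if δ * M < |K ω - M| then (1:ℝ) else 0) := by
    intro ω
    by_cases h : ω ∈ {ω | δ < |K ω / M - 1|}
    · rw [Set.indicator_of_mem h]
      have h2 : δ < |K ω - M| / M := by
        have h3 : K ω / M - 1 = (K ω - M) / M := by field_simp
        have h4 := h
        rw [Set.mem_setOf_eq, h3, abs_div, abs_of_pos hMpos] at h4
        exact h4
      rw [if_pos ((lt_div_iff₀ hMpos).mp h2)]
    · rw [Set.indicator_of_notMem h]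
      split_ifs <;> norm_num
  calc PExp q ({ω | δ < |K ω / M - 1|}.indicator fun _ => (1:ℝ))
      ≤ PExp q (fun ω => if δ * M < |K ω - M| then (1:ℝ) else 0) := PExp_mono hq0 hptT
    _ ≤ (PExp q (fun ω => K ω ^ 2) - M ^ 2) / (δ * M) ^ 2 :=
        PExp_cheb q hq0 hq1 K (δ * M) (by positivity)
    _ ≤ (c * n / 2) / (δ * M) ^ 2 := by
        have hd : (0:ℝ) < (δ * M)^2 := by positivity
        exact (div_le_div_iff_of_pos_right hd).mpr hvar
    _ ≤ (c * Real.exp (2*c) / (2 * δ^2)) / n := by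
        have he : (0:ℝ) < Real.exp (-c) := Real.exp_pos _
        have h1 : (0:ℝ) < (δ * ((n:ℝ) * Real.exp (-c)))^2 := by positivity
        have hle : δ * ((n:ℝ) * Real.exp (-c)) ≤ δ * M :=
          mul_le_mul_of_nonneg_left hMlb hδ.le
        have h2 : (δ * ((n:ℝ) * Real.exp (-c)))^2 ≤ (δ * M)^2 := by
          nlinarith [hle, (by positivity : (0:ℝ) ≤ δ * ((n:ℝ) * Real.exp (-c)))]
        have h3 : (c * n / 2) / (δ*M)^2 ≤ (c * n / 2) / (δ * ((n:ℝ)*Real.exp (-c)))^2 :=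
          div_le_div_of_nonneg_left (by positivity) h1 h2
        refine h3.trans (le_of_eq ?_)
        have h2c : Real.exp (2*c) = Real.exp c * Real.exp c := by
          rw [two_mul, Real.exp_add]
        rw [Real.exp_neg, h2c]
        have hcne : Real.exp c ≠ 0 := (Real.exp_pos c).ne'
        have hnne : (n:ℝ) ≠ 0 := hn0.ne'
        have hδne : δ ≠ 0 := hδ.ne'
        field_simp

end CycAux

/-- With `ε_n = max_ℓ p_ℓ^n → 0` and `t = cn/2`, the number of connected components is
concentrated around its mean: `K_t / E[K_t] → 1` in probability as `n → ∞`. -/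
theorem components_concentration
    (c : ℝ) (hc : 0 < c)
    (pdist : (n : ℕ) → Fin (n / 2) → ℝ)
    (hnn : ∀ n ℓ, 0 ≤ pdist n ℓ)
    (hsum : ∀ n, 2 ≤ n → ∑ ℓ, pdist n ℓ = 1)
    (ε : ℕ → ℝ) (hεb : ∀ n ℓ, pdist n ℓ ≤ ε n)
    (hε0 : Tendsto ε atTop (nhds 0)) :
    ∀ δ > (0 : ℝ),
      Tendsto (fun n =>
        ((cycMeasure n c (pdist n))
          {ω | δ < |(numComponents n ω : ℝ) /
              (∫ ω', (numComponents n ω' : ℝ) ∂cycMeasure n c (pdist n)) - 1|}).toReal)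
        atTop (nhds 0) := by
  intro δ hδ
  have hb : ∀ᶠ n in atTop, ((cycMeasure n c (pdist n))
      {ω | δ < |(numComponents n ω : ℝ) /
        (∫ ω', (numComponents n ω' : ℝ) ∂cycMeasure n c (pdist n)) - 1|}).toReal
      ≤ (c * Real.exp (2*c) / (2 * δ^2)) / n := by
    filter_upwards [eventually_ge_atTop 2] with n hn
    exact CycAux.main_bound c hc n hn (pdist n) (hnn n) (hsum n hn) δ hδ
  exact squeeze_zero' (Filter.Eventually.of_forall fun n => ENNReal.toReal_nonneg) hb
    (tendsto_const_div_atTop_nhds_zero_nat _)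
end
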